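/- Let f, g : E × ℝ → E be measurable. If the reconstruction loss of f vanishes, L_RC(f) = 0, then the consistency loss of the pair (f, g) equals the reconstruction-type loss of g at the lower noise levels: ∑_{m=1}^{M−1} ∫⁻ ‖f (a + k (m+1) • z, k (m+1)) − g (a + k m • z, k m)‖₊^2 ∂(P.prod γ) = ∑_{m=1}^{M−1} ∫⁻ ‖a − g (a + k m • z, k m)‖₊^2 ∂(P.prod γ). In particular, whenever both networks perfectly reconstruct (g (a + k m • z, k m) = a almost everywhere for all m ∈ {1, …, M−1} as well), the consistency training loss L_CT(f, g) is zero; this is the claim of Appendix A.2 that the reconstruction loss has the same convergence objective as the consistency loss. -/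

import Mathlib

open MeasureTheory ProbabilityTheory

/-- If the reconstruction loss of the consistency policy `f` vanishes, then the consistency
loss of the pair `(f, g)` equals the reconstruction-type loss of `g` at the lower noise
levels:
`∑_{m=1}^{M−1} ∫⁻ ‖f (a + k (m+1) • z, k (m+1)) − g (a + k m • z, k m)‖₊² ∂(P.prod γ)
  = ∑_{m=1}^{M−1} ∫⁻ ‖a − g (a + k m • z, k m)‖₊² ∂(P.prod γ)`.
In particular, if `g` also perfectly reconstructs at every lower noise level, then the
consistency training loss `L_CT(f, g)` is zero; this is the claim of Appendix A.2 that the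
reconstruction loss has the same convergence objective as the consistency loss. -/
theorem reconstruction_loss_zero_consistency_loss_eq
    (n : ℕ) (hn : 0 < n)
    (P : Measure (EuclideanSpace ℝ (Fin n))) [IsProbabilityMeasure P]
    (γ : Measure (EuclideanSpace ℝ (Fin n)))
    (hγ : γ = (Measure.pi fun _ : Fin n => gaussianReal 0 1).map
        (MeasurableEquiv.toLp 2 (Fin n → ℝ)))
    (M : ℕ) (hM : 2 ≤ M)
    (k : ℕ → ℝ) (hk : ∀ m ∈ Finset.Icc 1 M, 0 < k m)
    (f g : EuclideanSpace ℝ (Fin n) × ℝ → EuclideanSpace ℝ (Fin n))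
    (hf : Measurable f) (hg : Measurable g)
    (hloss : ∑ m ∈ Finset.Icc 1 (M - 1),
        ∫⁻ q, (‖f (q.1 + k (m + 1) • q.2, k (m + 1)) - q.1‖₊ : ENNReal) ^ 2
          ∂(P.prod γ) = 0) :
    (∑ m ∈ Finset.Icc 1 (M - 1),
        ∫⁻ q, (‖f (q.1 + k (m + 1) • q.2, k (m + 1))
            - g (q.1 + k m • q.2, k m)‖₊ : ENNReal) ^ 2 ∂(P.prod γ)
      = ∑ m ∈ Finset.Icc 1 (M - 1),
        ∫⁻ q, (‖q.1 - g (q.1 + k m • q.2, k m)‖₊ : ENNReal) ^ 2 ∂(P.prod γ)) ∧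
    ((∀ m ∈ Finset.Icc 1 (M - 1),
        ∀ᵐ q ∂(P.prod γ), g (q.1 + k m • q.2, k m) = q.1) →
      ∑ m ∈ Finset.Icc 1 (M - 1),
        ∫⁻ q, (‖f (q.1 + k (m + 1) • q.2, k (m + 1))
            - g (q.1 + k m • q.2, k m)‖₊ : ENNReal) ^ 2 ∂(P.prod γ) = 0) := by

  have hterm : ∀ m ∈ Finset.Icc 1 (M - 1),
      ∀ᵐ q ∂(P.prod γ), f (q.1 + k (m + 1) • q.2, k (m + 1)) = q.1 := by
    intro m hm
    have h0 : ∫⁻ q, (‖f (q.1 + k (m + 1) • q.2, k (m + 1)) - q.1‖₊ : ENNReal) ^ 2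
        ∂(P.prod γ) = 0 :=
      (Finset.sum_eq_zero_iff.mp hloss) m hm
    have hmeas : Measurable fun q : EuclideanSpace ℝ (Fin n) × EuclideanSpace ℝ (Fin n) =>
        (‖f (q.1 + k (m + 1) • q.2, k (m + 1)) - q.1‖₊ : ENNReal) ^ 2 := by
      apply Measurable.pow _ measurable_const
      apply Measurable.coe_nnreal_ennreal
      apply Measurable.nnnorm
      exact (hf.comp ((measurable_fst.add (measurable_snd.const_smul (k (m + 1)))).prodMk
        measurable_const)).sub measurable_fst
    have h1 := (lintegral_eq_zero_iff hmeas).mp h0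
    filter_upwards [h1] with q hq
    have hq' : (‖f (q.1 + k (m + 1) • q.2, k (m + 1)) - q.1‖₊ : ENNReal) ^ 2 = 0 := hq
    have := pow_eq_zero_iff (two_ne_zero) |>.mp hq'
    rw [ENNReal.coe_eq_zero, nnnorm_eq_zero, sub_eq_zero] at this
    exact this
  have hEq : ∑ m ∈ Finset.Icc 1 (M - 1),
        ∫⁻ q, (‖f (q.1 + k (m + 1) • q.2, k (m + 1))
            - g (q.1 + k m • q.2, k m)‖₊ : ENNReal) ^ 2 ∂(P.prod γ)
      = ∑ m ∈ Finset.Icc 1 (M - 1),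
        ∫⁻ q, (‖q.1 - g (q.1 + k m • q.2, k m)‖₊ : ENNReal) ^ 2 ∂(P.prod γ) := by
    refine Finset.sum_congr rfl fun m hm => lintegral_congr_ae ?_
    filter_upwards [hterm m hm] with q hq
    rw [hq]
  refine ⟨hEq, fun hgrec => ?_⟩
  rw [hEq]
  refine Finset.sum_eq_zero fun m hm => ?_
  have : ∫⁻ q, (‖q.1 - g (q.1 + k m • q.2, k m)‖₊ : ENNReal) ^ 2 ∂(P.prod γ)
      = ∫⁻ _, (0 : ENNReal) ∂(P.prod γ) := by
    refine lintegral_congr_ae ?_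
    filter_upwards [hgrec m hm] with q hq
    rw [hq]
    simp
  rw [this, lintegral_zero]
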